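/- Setting η_t = D / sqrt(2 ∑_{s=1}^t g_s²) in the regret bound B(η) = D²/(2η_T) + (1/2)∑_{t=1}^T g_t² η_t yields B(η) ≤ D * sqrt(2 ∑_{t=1}^T g_t²), i.e., this adaptive choice is within a factor √2 of the optimal bound D * sqrt(∑_t g_t²). -/

import Mathlib

open Finset

lemma range_succ_eq_Iic (m : ℕ) : Finset.range (m + 1) = Finset.Iic m := by
  ext a; simp [Nat.lt_succ_iff]

lemma key_step (S a : ℝ) (ha : 0 ≤ a) (haS : a ≤ S) :
    a / Real.sqrt S ≤ 2 * (Real.sqrt S - Real.sqrt (S - a)) := by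
  have hS : 0 ≤ S := le_trans ha haS
  rcases eq_or_lt_of_le hS with h | h
  · have : a = 0 := le_antisymm (by linarith) ha
    simp [this, ← h]
  · have hs : 0 < Real.sqrt S := Real.sqrt_pos.mpr h
    rw [div_le_iff₀ hs]
    have h1 : Real.sqrt (S - a) * Real.sqrt S ≤ S - a / 2 := by
      nlinarith [Real.sq_sqrt (sub_nonneg.mpr haS), Real.sq_sqrt hS,
        Real.sqrt_nonneg (S - a), Real.sqrt_nonneg S,
        sq_nonneg (Real.sqrt S - Real.sqrt (S - a))]
    nlinarith [Real.sq_sqrt hS]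

lemma sum_div_sqrt (f : ℕ → ℝ) (hf : ∀ i, 0 ≤ f i) (m : ℕ) :
    ∑ t ∈ Finset.range m, f t / Real.sqrt (∑ s ∈ Finset.range (t + 1), f s) ≤
      2 * Real.sqrt (∑ s ∈ Finset.range m, f s) := by
  induction m with
  | zero => simp
  | succ m ih =>
    rw [Finset.sum_range_succ, Finset.sum_range_succ (f := f)]
    have hSm : 0 ≤ ∑ s ∈ Finset.range m, f s := Finset.sum_nonneg fun i _ => hf i
    have hkey := key_step (∑ s ∈ Finset.range m, f s + f m) (f m) (hf m) (by linarith)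
    rw [add_sub_cancel_right] at hkey
    linarith

theorem stmt_2 (D : ℝ) (hD : 0 < D) (n : ℕ) (g : Fin (n + 1) → ℝ)
    (hpos : ∀ t, 0 < ∑ s ∈ Finset.Iic t, (g s) ^ 2) :
    (let η : Fin (n + 1) → ℝ :=
      fun t => D / Real.sqrt (2 * ∑ s ∈ Finset.Iic t, (g s) ^ 2)
     D ^ 2 / (2 * η (Fin.last n)) + (1 / 2) * ∑ t, (g t) ^ 2 * η t ≤
       D * Real.sqrt (2 * ∑ t, (g t) ^ 2)) := by
  intro η
  -- translate Fin sums to ℕ sums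
  set f : ℕ → ℝ := fun i => if h : i < n + 1 then (g ⟨i, h⟩) ^ 2 else 0 with hf
  have hfnn : ∀ i, 0 ≤ f i := by
    intro i; simp only [hf]; split <;> positivity
  have hIic : ∀ t : Fin (n + 1),
      ∑ s ∈ Finset.Iic t, (g s) ^ 2 = ∑ s ∈ Finset.range (t.1 + 1), f s := by
    intro t
    rw [range_succ_eq_Iic, ← Fin.map_valEmbedding_Iic, Finset.sum_map]
    refine Finset.sum_congr rfl fun x _ => ?_
    simp [hf, x.2, Nat.not_lt.mpr (Fin.is_le x)]
  have htot : ∑ t, (g t) ^ 2 = ∑ s ∈ Finset.range (n + 1), f s := by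
    rw [← Fin.sum_univ_eq_sum_range f (n + 1)]
    refine Finset.sum_congr rfl fun t _ => ?_
    simp [hf, t.2, Nat.not_lt.mpr (Fin.is_le t)]
  set S : ℝ := ∑ s ∈ Finset.range (n + 1), f s with hS
  have hSpos : 0 < S := by
    rw [← htot]
    have := hpos (Fin.last n)
    calc (0:ℝ) < ∑ s ∈ Finset.Iic (Fin.last n), (g s) ^ 2 := this
    _ = ∑ t, (g t) ^ 2 := by
        refine Finset.sum_congr ?_ fun _ _ => rfl
        ext x; simp [Fin.le_last]
  have hlast : ∑ s ∈ Finset.Iic (Fin.last n), (g s) ^ 2 = S := by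
    rw [hIic]; rfl
  -- first term
  have hsqrt2S : 0 < Real.sqrt (2 * S) := Real.sqrt_pos.mpr (by linarith)
  have hterm1 : D ^ 2 / (2 * η (Fin.last n)) = D * Real.sqrt (2 * S) / 2 := by
    simp only [η, hlast]
    field_simp
  -- second term
  have hterm2 : (1 / 2) * ∑ t, (g t) ^ 2 * η t ≤ D * Real.sqrt (2 * S) / 2 := by
    have hstep : ∀ t : Fin (n + 1), (g t) ^ 2 * η t =
        (D / Real.sqrt 2) * (f t.1 / Real.sqrt (∑ s ∈ Finset.range (t.1 + 1), f s)) := by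
      intro t
      have hft : f t.1 = (g t) ^ 2 := by simp [hf, t.2, Nat.not_lt.mpr (Fin.is_le t)]
      simp only [η, hIic, hft]
      rw [Real.sqrt_mul (by norm_num)]
      field_simp
    calc (1 / 2) * ∑ t, (g t) ^ 2 * η t
        = (D / (2 * Real.sqrt 2)) *
          ∑ t ∈ Finset.range (n + 1), f t / Real.sqrt (∑ s ∈ Finset.range (t + 1), f s) := by
          rw [← Fin.sum_univ_eq_sum_range (fun t => f t / Real.sqrt (∑ s ∈ Finset.range (t + 1), f s))]
          rw [Finset.mul_sum, Finset.mul_sum]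
          refine Finset.sum_congr rfl fun t _ => ?_
          rw [hstep t]; ring
      _ ≤ (D / (2 * Real.sqrt 2)) * (2 * Real.sqrt S) := by
          apply mul_le_mul_of_nonneg_left (sum_div_sqrt f hfnn (n + 1))
          positivity
      _ = D * Real.sqrt (2 * S) / 2 := by
          rw [Real.sqrt_mul (by norm_num)]
          have h2 : Real.sqrt 2 > 0 := by positivity
          have h22 : Real.sqrt 2 * Real.sqrt 2 = 2 :=
            Real.mul_self_sqrt (by norm_num)
          field_simp
          linear_combination (-1 : ℝ) * h22
  rw [htot, hterm1]
  linarith
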